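/- (Walk-transfer for equal configurations) Suppose Ψ_i(E') = Ψ_i(F') for E', F' ⊆ E_{<i}. Given any directed walk from a vertex of S to a vertex x ∈ W_i in (V, E'∪H) with H ⊆ E_{≥i}, there exists a directed walk from some vertex of S to x in (V, F'∪H). -/

import Mathlib

open scoped Classical
open Finset

noncomputable section

/-- `inc src tgt e x` : edge `e` is incident to vertex `x`. -/
def inc {V : Type*} (src tgt : ℕ → V) (e : ℕ) (x : V) : Prop := src e = x ∨ tgt e = x

/-- Reachability in the subgraph with edge set `A`. -/
def Reach {V : Type*} (src tgt : ℕ → V) (A : Finset ℕ) (x y : V) : Prop :=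
  Relation.ReflTransGen (fun a b => ∃ e ∈ A, src e = a ∧ tgt e = b) x y

/-- `v` is reachable from some vertex of `S` in the subgraph with edge set `A`. -/
def SReach {V : Type*} (src tgt : ℕ → V) (A : Finset ℕ) (S : Finset V) (v : V) : Prop :=
  ∃ s ∈ S, Reach src tgt A s v

/-- Probability that exactly the edges in `X` (among `e_0,…,e_{m-1}`) are present. -/
def prW (p : ℕ → ℝ) (m : ℕ) (X : Finset ℕ) : ℝ :=
  (∏ e ∈ X, p e) * ∏ e ∈ Finset.range m \ X, (1 - p e)

/-- Probability that `v` is reachable from the seed set `S`. -/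
def probReach {V : Type*} (src tgt : ℕ → V) (p : ℕ → ℝ) (m : ℕ) (S : Finset V) (v : V) : ℝ :=
  ∑ X ∈ (Finset.range m).powerset, if SReach src tgt X S v then prW p m X else 0

/-- Conditional probability of `event` given that all edges in `A` are present and
all edges in `B` are absent. -/
def condP (p : ℕ → ℝ) (m : ℕ) (A B : Finset ℕ) (event : Finset ℕ → Prop) : ℝ :=
  (∑ X ∈ (Finset.range m).powerset,
      if A ⊆ X ∧ X ∩ B = ∅ ∧ event X then prW p m X else 0) /
  (∑ X ∈ (Finset.range m).powerset, if A ⊆ X ∧ X ∩ B = ∅ then prW p m X else 0)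

/-- The frontier `W_i`: vertices incident both to an edge of `E_{<i}` and to an edge of
`E_{≥ i}` (as a set). -/
def frontSet {V : Type*} (src tgt : ℕ → V) (m i : ℕ) : Set V :=
  {x | (∃ e ∈ Finset.range i, inc src tgt e x) ∧
       ∃ e ∈ Finset.range m \ Finset.range i, inc src tgt e x}

/-- The frontier `W_i` as a finset. -/
def front {V : Type*} [Fintype V] (src tgt : ℕ → V) (m i : ℕ) : Finset V :=
  Finset.univ.filter fun x =>
    (∃ e ∈ Finset.range i, inc src tgt e x) ∧
    ∃ e ∈ Finset.range m \ Finset.range i, inc src tgt e x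

/-- The shared transversal configuration `Ψ_i(A)`: the set of frontier vertices reachable
from `S`, together with the reachability relation among unreached frontier vertices. -/
def Psi {V : Type*} [Fintype V] (src tgt : ℕ → V) (m : ℕ) (S : Finset V) (i : ℕ)
    (A : Finset ℕ) : Finset V × Finset (V × V) :=
  ((front src tgt m i).filter fun x => SReach src tgt A S x,
   ((front src tgt m i) ×ˢ (front src tgt m i)).filter fun q =>
     ¬ SReach src tgt A S q.1 ∧ Reach src tgt A q.1 q.2)

/-- The transversal configuration `Φ_i^v(A)`: the sets `W_i^{S⇝}`, `W_i^{⇝v}`, the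
reachability matrix on the remaining rows/columns (with extra column `v`), and the
entry `Φ_{S,v}`. -/
def Phi {V : Type*} [Fintype V] (src tgt : ℕ → V) (m : ℕ) (S : Finset V) (i : ℕ) (v : V)
    (A : Finset ℕ) : Finset V × Finset V × Finset (V × V) × Prop :=
  ((front src tgt m i).filter fun x => SReach src tgt A S x,
   (front src tgt m i).filter fun x => Reach src tgt A x v,
   (((front src tgt m i) ∪ {v}) ×ˢ ((front src tgt m i) ∪ {v})).filter fun q =>
     (q.1 ∈ front src tgt m i ∧ ¬ SReach src tgt A S q.1) ∧
     (q.2 = v ∨ (q.2 ∈ front src tgt m i ∧ ¬ Reach src tgt A q.2 v)) ∧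
     Reach src tgt A q.1 q.2,
   SReach src tgt A S v)

/-- Probability that the shared transversal configuration `Ψ` appears at level `i`. -/
def PrPsi {V : Type*} [Fintype V] (src tgt : ℕ → V) (p : ℕ → ℝ) (m : ℕ) (S : Finset V)
    (i : ℕ) (Ψ : Finset V × Finset (V × V)) : ℝ :=
  ∑ A ∈ (Finset.range i).powerset,
    if Psi src tgt m S i A = Ψ then
      (∏ e ∈ A, p e) * ∏ e ∈ Finset.range i \ A, (1 - p e)
    else 0

/-- `IsWalk src tgt A x y es`: `es` is a directed walk from `x` to `y` using edges in `A`. -/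
def IsWalk {V : Type*} (src tgt : ℕ → V) (A : Finset ℕ) : V → V → List ℕ → Prop
  | x, y, [] => x = y
  | x, y, e :: es => e ∈ A ∧ src e = x ∧ IsWalk src tgt A (tgt e) y es


lemma reach_mono' {V : Type*} (src tgt : ℕ → V) {A B : Finset ℕ} (hAB : A ⊆ B) {u x : V}
    (h : Reach src tgt A u x) : Reach src tgt B u x :=
  Relation.ReflTransGen.mono (fun a b ⟨e, he, h1, h2⟩ => ⟨e, hAB he, h1, h2⟩) u x h

lemma reach_to_walk' {V : Type*} (src tgt : ℕ → V) {A : Finset ℕ} {u x : V}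
    (h : Reach src tgt A u x) : ∃ es, IsWalk src tgt A u x es := by
  induction h using Relation.ReflTransGen.head_induction_on with
  | refl => exact ⟨[], rfl⟩
  | head hstep _ ih =>
    obtain ⟨e, he, h1, h2⟩ := hstep
    obtain ⟨es, hes⟩ := ih
    exact ⟨e :: es, he, h1, h2 ▸ hes⟩

/-- Walk transfer for equal shared transversal configurations: any walk from `S` to a
frontier vertex `x` in `(V, E' ∪ H)` can be transferred to a walk from `S` to `x` in
`(V, F' ∪ H)`. -/
theorem stmt19 {V : Type*} (src tgt : ℕ → V) (m : ℕ) (S : Finset V)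
    (i : ℕ) (him : i ≤ m) (E' F' : Finset ℕ)
    (hE' : E' ⊆ Finset.range i) (hF' : F' ⊆ Finset.range i)
    (hR : ∀ y ∈ frontSet src tgt m i,
      (SReach src tgt E' S y ↔ SReach src tgt F' S y))
    (hM : ∀ u ∈ frontSet src tgt m i, ∀ y ∈ frontSet src tgt m i,
      ¬ SReach src tgt E' S u → (Reach src tgt E' u y ↔ Reach src tgt F' u y))
    (x : V) (hx : x ∈ frontSet src tgt m i)
    (H : Finset ℕ) (hH : H ⊆ Finset.range m \ Finset.range i)
    (s : V) (hs : s ∈ S) (es : List ℕ) (hwalk : IsWalk src tgt (E' ∪ H) s x es) :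
    ∃ s' ∈ S, ∃ es' : List ℕ, IsWalk src tgt (F' ∪ H) s' x es' := by
  -- frontier builder
  have hfront : ∀ u : V, (∃ e ∈ E', inc src tgt e u) →
      (∃ e ∈ Finset.range m \ Finset.range i, inc src tgt e u) →
      u ∈ frontSet src tgt m i := by
    rintro u ⟨e, he, hinc⟩ h2
    exact ⟨⟨e, hE' he, hinc⟩, h2⟩
  -- crossing lemma
  have cross : ∀ u : V,
      (∃ w, Reach src tgt E' w u ∧ (SReach src tgt E' S w ∨
        (¬ SReach src tgt E' S w ∧ SReach src tgt (F' ∪ H) S w ∧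
         ∃ e ∈ Finset.range m \ Finset.range i, inc src tgt e w))) →
      (∃ e ∈ Finset.range m \ Finset.range i, inc src tgt e u) →
      SReach src tgt (F' ∪ H) S u := by
    rintro u ⟨w, hwu, hcase⟩ hu2
    rcases hcase with ⟨s', hs', hsw⟩ | ⟨hnw, hSw, hw2⟩
    · have hsu : Reach src tgt E' s' u := hsw.trans hwu
      rcases (Relation.ReflTransGen.cases_tail hsu) with h | ⟨c, _, e, heE', _, hte⟩
      · subst h
        exact ⟨u, hs', Relation.ReflTransGen.refl⟩
      · have huF : u ∈ frontSet src tgt m i := hfront u ⟨e, heE', Or.inr hte⟩ hu2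
        obtain ⟨t, ht, htu⟩ := (hR u huF).mp ⟨s', hs', hsu⟩
        exact ⟨t, ht, reach_mono' src tgt Finset.subset_union_left htu⟩
    · rcases (Relation.ReflTransGen.cases_tail hwu) with h | ⟨c, _, e, heE', _, hte⟩
      · rw [h]; exact hSw
      · have huF := hfront u ⟨e, heE', Or.inr hte⟩ hu2
        rcases (Relation.ReflTransGen.cases_head hwu) with h | ⟨c', ⟨e', he', hse', _⟩, _⟩
        · rw [← h]; exact hSw
        · have hwF := hfront w ⟨e', he', Or.inl hse'⟩ hw2
          have hFwu := (hM w hwF u huF hnw).mp hwu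
          obtain ⟨t, ht, htw⟩ := hSw
          exact ⟨t, ht, htw.trans (reach_mono' src tgt Finset.subset_union_left hFwu)⟩
  -- main induction on the walk
  have main : ∀ es : List ℕ, ∀ u : V, IsWalk src tgt (E' ∪ H) u x es →
      (∃ w, Reach src tgt E' w u ∧ (SReach src tgt E' S w ∨
        (¬ SReach src tgt E' S w ∧ SReach src tgt (F' ∪ H) S w ∧
         ∃ e ∈ Finset.range m \ Finset.range i, inc src tgt e w))) →
      SReach src tgt (F' ∪ H) S x := by
    intro es
    induction es with
    | nil =>
      intro u hw hJ
      have hxu : u = x := hw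
      subst hxu
      exact cross u hJ hx.2
    | cons e rest ih =>
      rintro u ⟨heEH, hse, hrest⟩ hJ
      by_cases heE' : e ∈ E'
      · obtain ⟨w, hwu, hcase⟩ := hJ
        exact ih (tgt e) hrest ⟨w, hwu.tail ⟨e, heE', hse, rfl⟩, hcase⟩
      · have heH : e ∈ H := by
          rcases Finset.mem_union.mp heEH with h | h
          · exact absurd h heE'
          · exact h
        have hu2 : ∃ e' ∈ Finset.range m \ Finset.range i, inc src tgt e' u :=
          ⟨e, hH heH, Or.inl hse⟩
        obtain ⟨t, ht, htu⟩ := cross u hJ hu2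
        have hSt : SReach src tgt (F' ∪ H) S (tgt e) :=
          ⟨t, ht, htu.tail ⟨e, Finset.mem_union_right _ heH, hse, rfl⟩⟩
        by_cases hS' : SReach src tgt E' S (tgt e)
        · exact ih (tgt e) hrest ⟨tgt e, Relation.ReflTransGen.refl, Or.inl hS'⟩
        · exact ih (tgt e) hrest ⟨tgt e, Relation.ReflTransGen.refl,
            Or.inr ⟨hS', hSt, ⟨e, hH heH, Or.inr rfl⟩⟩⟩
  obtain ⟨s'', hs'', hreach⟩ := main es s hwalk
    ⟨s, Relation.ReflTransGen.refl, Or.inl ⟨s, hs, Relation.ReflTransGen.refl⟩⟩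
  obtain ⟨es', hes'⟩ := reach_to_walk' src tgt hreach
  exact ⟨s'', hs'', es', hes'⟩

end
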